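/- Let k ≥ 2, 0 ≤ ℓ ≤ k-1, j ∈ {0,...,ℓ+1}, and suppose d ≥ max{k-ℓ, ⌊k/2⌋+1}. Let V = V₁ ∪ V₂ be a partition of an n-vertex set with both parts nonempty of size at least k, and let H be the k-graph on V whose edges are all k-sets e with |e ∩ V₁| ≡ j (mod ℓ+2). Then the minimum d-degree δ_d(H) = 0, i.e., there exists a d-set S of vertices contained in no edge of H. -/

import Mathlib

open Finset

/-- If `d ≥ max{k-ℓ, ⌊k/2⌋+1}` then the divisibility-barrier `k`-graph on the
bipartition `V₁ ∪ V₂` (edges: `k`-sets `e` with `|e ∩ V₁| ≡ j (mod ℓ+2)`) has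
minimum `d`-degree zero: some `d`-set lies in no edge. -/
theorem stmt_7 {α : Type*} [DecidableEq α] (k ℓ j d : ℕ)
    (hk : 2 ≤ k) (hℓ : ℓ ≤ k - 1) (hj : j ≤ ℓ + 1)
    (hd : max (k - ℓ) (k / 2 + 1) ≤ d) (hd' : d ≤ k - 1)
    (V₁ V₂ : Finset α) (hdisj : Disjoint V₁ V₂)
    (hV₁ : k ≤ V₁.card) (hV₂ : k ≤ V₂.card) :
    ∃ S : Finset α, S ⊆ V₁ ∪ V₂ ∧ S.card = d ∧
      ∀ e : Finset α, e ⊆ V₁ ∪ V₂ → e.card = k →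
        (e ∩ V₁).card % (ℓ + 2) = j % (ℓ + 2) → ¬ S ⊆ e := by
  -- choose a suitable number `a` of vertices of `S` inside `V₁`
  have harith : ∃ a, a ≤ d ∧ ∀ m, a ≤ m → m ≤ a + (k - d) →
      m ≠ j ∧ m < j + (ℓ + 2) := by
    rcases le_or_gt (k - d + 1) j with h | h
    · exact ⟨j - (k - d + 1), by omega, fun m h1 h2 => by omega⟩
    · exact ⟨min (j + ℓ + 1 - (k - d)) d, by omega, fun m h1 h2 => by omega⟩
  obtain ⟨a, had, hprop⟩ := harith
  obtain ⟨A, hA, hAcard⟩ := Finset.exists_subset_card_eq (s := V₁) (n := a) (by omega)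
  obtain ⟨B, hB, hBcard⟩ := Finset.exists_subset_card_eq (s := V₂) (n := d - a) (by omega)
  have hABdisj : Disjoint A B := hdisj.mono hA hB
  refine ⟨A ∪ B, Finset.union_subset_union hA hB, ?_, ?_⟩
  · rw [Finset.card_union_of_disjoint hABdisj, hAcard, hBcard]; omega
  · intro e he hecard hemod hSe
    have hAe : A ⊆ e ∩ V₁ :=
      Finset.subset_inter ((Finset.subset_union_left).trans hSe) hA
    have hBe : B ⊆ e ∩ V₂ :=
      Finset.subset_inter ((Finset.subset_union_right).trans hSe) hB
    have h1 : a ≤ (e ∩ V₁).card := hAcard ▸ Finset.card_le_card hAe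
    have h2 : d - a ≤ (e ∩ V₂).card := hBcard ▸ Finset.card_le_card hBe
    have hsplit : (e ∩ V₁).card + (e ∩ V₂).card = k := by
      rw [← Finset.card_union_of_disjoint
        (hdisj.mono Finset.inter_subset_right Finset.inter_subset_right),
        ← Finset.inter_union_distrib_left,
        Finset.inter_eq_left.mpr he, hecard]
    set m := (e ∩ V₁).card with hm
    have hub : m ≤ a + (k - d) := by omega
    obtain ⟨hne, hlt⟩ := hprop m h1 hub
    have hjlt : j % (ℓ + 2) = j := Nat.mod_eq_of_lt (by omega)
    rw [hjlt] at hemod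
    rcases lt_or_ge m (ℓ + 2) with hc | hc
    · rw [Nat.mod_eq_of_lt hc] at hemod; omega
    · rw [Nat.mod_eq_sub_mod hc, Nat.mod_eq_of_lt (by omega)] at hemod; omega
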